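/- Let k ≥ 1 be an integer and let G be a k-tree that is not a complete graph. Then G has two non-adjacent k-simplicial vertices. -/

import Mathlib

open SimpleGraph

/-- The set of neighbors of `e i` among the earlier vertices `e j`, `j < i`. -/
def earlierNbrs {V : Type} (G : SimpleGraph V) {p : ℕ} (e : Fin p ≃ V) (i : Fin p) : Set V :=
  {v | ∃ j : Fin p, j < i ∧ v = e j ∧ G.Adj (e i) v}

/-- `e` is a `k`-simplicial ordering of the vertices of `G`. -/
def IsKSimplicialOrdering {V : Type} [Fintype V] (k : ℕ) (G : SimpleGraph V)
    (e : Fin (Fintype.card V) ≃ V) : Prop :=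
  G.IsClique (⇑e '' {i | (i : ℕ) < k}) ∧
  ∀ i : Fin (Fintype.card V), k ≤ (i : ℕ) →
    G.IsClique (earlierNbrs G e i) ∧ (earlierNbrs G e i).ncard = k

/-- A `k`-tree is a graph on at least `k` vertices admitting a `k`-simplicial ordering. -/
def IsKTree {V : Type} [Fintype V] (k : ℕ) (G : SimpleGraph V) : Prop :=
  k ≤ Fintype.card V ∧ ∃ e : Fin (Fintype.card V) ≃ V, IsKSimplicialOrdering k G e

/-- A `k`-simplicial vertex: a vertex of degree exactly `k` whose neighborhood is a clique. -/
def IsKSimplicialVertex {V : Type} (G : SimpleGraph V) (k : ℕ) (v : V) : Prop :=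
  G.IsClique (G.neighborSet v) ∧ (G.neighborSet v).ncard = k

/-- Earlier neighbours for a graph on `Fin n` with the identity ordering. -/
def EN {n : ℕ} (G : SimpleGraph (Fin n)) (i : Fin n) : Set (Fin n) :=
  {v | v < i ∧ G.Adj i v}

lemma isClique_comap {α β : Type*} {f : α → β} (hf : Function.Injective f)
    {G : SimpleGraph β} {s : Set α} :
    (G.comap f).IsClique s ↔ G.IsClique (f '' s) := by
  constructor
  · rintro h _ ⟨a, ha, rfl⟩ _ ⟨b, hb, rfl⟩ hab
    exact h ha hb (fun hh => hab (by rw [hh]))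
  · intro h a ha b hb hab
    exact h ⟨a, ha, rfl⟩ ⟨b, hb, rfl⟩ (fun hh => hab (hf hh))

lemma earlierNbrs_eq_image {V : Type} (G : SimpleGraph V) {p : ℕ} (e : Fin p ≃ V) (i : Fin p) :
    earlierNbrs G e i = ⇑e '' EN (G.comap ⇑e) i := by
  ext v
  constructor
  · rintro ⟨j, hj, rfl, hadj⟩
    exact ⟨j, ⟨hj, hadj⟩, rfl⟩
  · rintro ⟨j, ⟨hj, hadj⟩, rfl⟩
    exact ⟨j, hj, rfl, hadj⟩

theorem aux (k : ℕ) (hk : 1 ≤ k) :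
    ∀ n : ℕ, k ≤ n → ∀ G : SimpleGraph (Fin n),
      G.IsClique {i : Fin n | (i : ℕ) < k} →
      (∀ i : Fin n, k ≤ (i : ℕ) → G.IsClique (EN G i) ∧ (EN G i).ncard = k) →
      (¬ ∀ x y : Fin n, x ≠ y → G.Adj x y) →
      ∃ x y : Fin n, x ≠ y ∧ ¬ G.Adj x y ∧
        IsKSimplicialVertex G k x ∧ IsKSimplicialVertex G k y := by
  intro n
  induction n with
  | zero => intro hkn; omega
  | succ n ih =>
    intro hkn G h0 h hnc
    by_cases hk' : k ≤ n
    swap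
    · -- n + 1 = k : the graph is complete, contradiction
      exfalso
      apply hnc
      intro a b hab
      exact h0 (show (a : ℕ) < k by have := a.isLt; omega)
        (show (b : ℕ) < k by have := b.isLt; omega) hab
    -- the last vertex
    set x : Fin (n + 1) := Fin.last n with hxdef
    have hxv : (x : ℕ) = n := rfl
    have hxspec := h x (by omega)
    have hNx : G.neighborSet x = EN G x := by
      ext v
      constructor
      · intro hv
        refine ⟨?_, hv⟩
        have hvx : v ≠ x := fun hh => G.loopless.irrefl x (hh ▸ hv)
        have : (v : ℕ) ≠ n := fun hh => hvx (Fin.ext (by simpa [hxv] using hh))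
        have := v.isLt
        exact Fin.lt_def.mpr (by omega)
      · rintro ⟨-, hv⟩; exact hv
    have hxs : IsKSimplicialVertex G k x := by
      rw [IsKSimplicialVertex, hNx]; exact hxspec
    -- the graph with the last vertex removed
    set G' : SimpleGraph (Fin n) := G.comap Fin.castSucc with hG'def
    have hinj : Function.Injective (Fin.castSucc : Fin n → Fin (n + 1)) :=
      Fin.castSucc_injective n
    have hadj' : ∀ a b : Fin n, G'.Adj a b ↔ G.Adj a.castSucc b.castSucc := fun a b => Iff.rfl
    have h0' : G'.IsClique {i : Fin n | (i : ℕ) < k} := by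
      intro a ha b hb hab
      exact h0 (show ((a.castSucc : Fin (n+1)) : ℕ) < k from ha)
        (show ((b.castSucc : Fin (n+1)) : ℕ) < k from hb) (fun hh => hab (hinj hh))
    have hEN : ∀ i : Fin n, EN G i.castSucc = Fin.castSucc '' EN G' i := by
      intro i
      ext v
      constructor
      · rintro ⟨hlt, hadjv⟩
        have hvx : v ≠ x := ne_of_lt (lt_trans hlt (Fin.castSucc_lt_last i))
        obtain ⟨v', rfl⟩ := Fin.exists_castSucc_eq.mpr hvx
        exact ⟨v', ⟨Fin.castSucc_lt_castSucc_iff.mp hlt, hadjv⟩, rfl⟩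
      · rintro ⟨v', ⟨hlt, hadjv⟩, rfl⟩
        exact ⟨Fin.castSucc_lt_castSucc_iff.mpr hlt, hadjv⟩
    have h' : ∀ i : Fin n, k ≤ (i : ℕ) → G'.IsClique (EN G' i) ∧ (EN G' i).ncard = k := by
      intro i hi
      obtain ⟨hc, hcard⟩ := h i.castSucc hi
      rw [hEN i] at hc hcard
      exact ⟨(isClique_comap hinj).mpr hc,
        by rwa [Set.ncard_image_of_injective _ hinj] at hcard⟩
    have hsimp' : ∀ u : Fin n, ¬ G.Adj x u.castSucc →
        IsKSimplicialVertex G' k u → IsKSimplicialVertex G k u.castSucc := by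
      intro u hxu hu
      have hNu : G.neighborSet u.castSucc = Fin.castSucc '' G'.neighborSet u := by
        ext w
        constructor
        · intro hw
          have hwx : w ≠ x := by rintro rfl; exact hxu hw.symm
          obtain ⟨w', rfl⟩ := Fin.exists_castSucc_eq.mpr hwx
          exact ⟨w', hw, rfl⟩
        · rintro ⟨w', hw', rfl⟩; exact hw'
      exact ⟨by rw [hNu]; exact (isClique_comap hinj).mp hu.1,
        by rw [hNu, Set.ncard_image_of_injective _ hinj]; exact hu.2⟩
    by_cases hcomp : ∀ a b : Fin n, a ≠ b → G'.Adj a b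
    · -- G' is complete
      push_neg at hnc
      obtain ⟨a, b, hab, hnab⟩ := hnc
      have hxy : ∃ y : Fin (n + 1), y ≠ x ∧ ¬ G.Adj x y := by
        by_cases ha : a = x
        · refine ⟨b, ?_, by rwa [ha] at hnab⟩
          rintro rfl; exact hab ha
        · by_cases hb : b = x
          · exact ⟨a, ha, by rw [hb] at hnab; exact fun hh => hnab hh.symm⟩
          · exfalso
            obtain ⟨a', rfl⟩ := Fin.exists_castSucc_eq.mpr ha
            obtain ⟨b', rfl⟩ := Fin.exists_castSucc_eq.mpr hb
            exact hnab (hcomp a' b' (fun hh => hab (congrArg Fin.castSucc hh)))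
      obtain ⟨y, hyx, hxny⟩ := hxy
      obtain ⟨y', rfl⟩ := Fin.exists_castSucc_eq.mpr hyx
      -- counting : k ≤ n - 1
      have hsub : G.neighborSet x ⊆ (Set.univ : Set (Fin (n + 1))) \ {x, y'.castSucc} := by
        intro w hw
        refine ⟨trivial, ?_⟩
        rintro (rfl | rfl)
        · exact G.loopless.irrefl _ hw
        · exact hxny hw
      have hk1 : k + 1 ≤ n := by
        have h2 : ((Set.univ : Set (Fin (n + 1))) \ {x, y'.castSucc}).ncard = n + 1 - 2 := by
          rw [Set.ncard_diff (Set.subset_univ _), Set.ncard_univ,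
            Set.ncard_pair (Ne.symm hyx)]
          simp
        have h3 := Set.ncard_le_ncard hsub (Set.toFinite _)
        rw [hxs.2, h2] at h3
        -- k ≤ n - 1; also need y'.castSucc ≠ x so the pair has 2 elements (used above)
        omega
      -- n ≤ k + 1
      have hnk : n ≤ k + 1 := by
        by_contra hcon
        push_neg at hcon
        set i : Fin (n + 1) := ⟨k + 1, by omega⟩ with hidef
        obtain ⟨-, hcard⟩ := h i (by simp [hidef])
        set S : Set (Fin (n + 1)) :=
          (fun j : Fin (k + 1) => (⟨(j : ℕ), by omega⟩ : Fin (n + 1))) '' Set.univ with hSdef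
        have hjinj : Function.Injective
            (fun j : Fin (k + 1) => (⟨(j : ℕ), by omega⟩ : Fin (n + 1))) :=
          by
            intro a b hab
            simp only [Fin.mk.injEq] at hab
            exact Fin.ext hab
        have hScard : S.ncard = k + 1 := by
          rw [hSdef, Set.ncard_image_of_injective _ hjinj, Set.ncard_univ]
          simp
        have hSsub : S ⊆ EN G i := by
          rintro _ ⟨j, -, rfl⟩
          have hj := j.isLt
          refine ⟨Fin.lt_def.mpr (by simpa [hidef] using hj), ?_⟩
          have hne : (⟨k + 1, by omega⟩ : Fin n) ≠ ⟨(j : ℕ), by omega⟩ := by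
            intro hh
            have := congrArg Fin.val hh
            simp at this
            omega
          have := hcomp ⟨k + 1, by omega⟩ ⟨(j : ℕ), by omega⟩ hne
          rw [hadj'] at this
          convert this using 2 <;> exact Fin.ext rfl
        have hle := Set.ncard_le_ncard hSsub (Set.toFinite _)
        rw [hScard, hcard] at hle
        omega
      have hnval : n = k + 1 := by omega
      -- y is k-simplicial
      have hNy : G.neighborSet y'.castSucc = Fin.castSucc '' (Set.univ \ {y'}) := by
        ext w
        constructor
        · intro hw
          have hwx : w ≠ x := by rintro rfl; exact hxny hw.symm
          obtain ⟨w', rfl⟩ := Fin.exists_castSucc_eq.mpr hwx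
          refine ⟨w', ⟨trivial, ?_⟩, rfl⟩
          rintro rfl; exact G.loopless.irrefl _ hw
        · rintro ⟨w', ⟨-, hw'⟩, rfl⟩
          have := hcomp y' w' (Ne.symm hw')
          rwa [hadj'] at this
      have hys : IsKSimplicialVertex G k y'.castSucc := by
        constructor
        · intro c hc d hd hcd
          have hcx : c ≠ x := by rintro rfl; exact hxny hc.symm
          have hdx : d ≠ x := by rintro rfl; exact hxny hd.symm
          obtain ⟨c', rfl⟩ := Fin.exists_castSucc_eq.mpr hcx
          obtain ⟨d', rfl⟩ := Fin.exists_castSucc_eq.mpr hdx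
          have := hcomp c' d' (fun hh => hcd (congrArg Fin.castSucc hh))
          rwa [hadj'] at this
        · rw [hNy, Set.ncard_image_of_injective _ hinj,
            Set.ncard_diff (Set.subset_univ _), Set.ncard_univ]
          simp
          omega
      exact ⟨x, y'.castSucc, hyx.symm, hxny, hxs, hys⟩
    · -- G' is not complete : use the induction hypothesis
      obtain ⟨u, v, huv, hnadj, hu, hv⟩ := ih hk' G' h0' h' hcomp
      have key : ¬ G.Adj x u.castSucc ∨ ¬ G.Adj x v.castSucc := by
        by_contra hcon
        push_neg at hcon
        have hadjuv := hxs.1 (show u.castSucc ∈ G.neighborSet x from hcon.1)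
          (show v.castSucc ∈ G.neighborSet x from hcon.2)
          (fun hh => huv (hinj hh))
        exact hnadj ((hadj' u v).mpr hadjuv)
      rcases key with hn | hn
      · exact ⟨x, u.castSucc, (ne_of_lt (Fin.castSucc_lt_last u)).symm, hn, hxs,
          hsimp' u hn hu⟩
      · exact ⟨x, v.castSucc, (ne_of_lt (Fin.castSucc_lt_last v)).symm, hn, hxs,
          hsimp' v hn hv⟩

lemma simplicial_of_comap {V : Type} (G : SimpleGraph V) {p : ℕ} (e : Fin p ≃ V) (k : ℕ)
    (x : Fin p) (h : IsKSimplicialVertex (G.comap ⇑e) k x) : IsKSimplicialVertex G k (e x) := by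
  have hN : G.neighborSet (e x) = ⇑e '' (G.comap ⇑e).neighborSet x := by
    ext v
    constructor
    · intro hv
      refine ⟨e.symm v, ?_, e.apply_symm_apply v⟩
      simp only [SimpleGraph.mem_neighborSet, SimpleGraph.comap_adj, Equiv.apply_symm_apply]
      exact hv
    · rintro ⟨u, hu, rfl⟩; exact hu
  exact ⟨by rw [hN]; exact (isClique_comap e.injective).mp h.1,
    by rw [hN, Set.ncard_image_of_injective _ e.injective]; exact h.2⟩

/-- A `k`-tree (`k ≥ 1`) that is not a complete graph has two non-adjacent
`k`-simplicial vertices. -/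
theorem ktree_two_nonadjacent_simplicial {V : Type} [Fintype V] (k : ℕ) (hk : 1 ≤ k)
    (G : SimpleGraph V) (hG : IsKTree k G)
    (hnc : ¬ ∀ x y : V, x ≠ y → G.Adj x y) :
    ∃ x y : V, x ≠ y ∧ ¬ G.Adj x y ∧
      IsKSimplicialVertex G k x ∧ IsKSimplicialVertex G k y := by
  obtain ⟨hkcard, e, hcl, hord⟩ := hG
  set G₀ : SimpleGraph (Fin (Fintype.card V)) := G.comap ⇑e with hG₀def
  have h0 : G₀.IsClique {i : Fin (Fintype.card V) | (i : ℕ) < k} :=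
    (isClique_comap e.injective).mpr hcl
  have h1 : ∀ i : Fin (Fintype.card V), k ≤ (i : ℕ) →
      G₀.IsClique (EN G₀ i) ∧ (EN G₀ i).ncard = k := by
    intro i hi
    obtain ⟨hc, hcard⟩ := hord i hi
    rw [earlierNbrs_eq_image G e i] at hc hcard
    exact ⟨(isClique_comap e.injective).mpr hc,
      by rwa [Set.ncard_image_of_injective _ e.injective] at hcard⟩
  have hnc₀ : ¬ ∀ x y : Fin (Fintype.card V), x ≠ y → G₀.Adj x y := by
    intro hall
    apply hnc
    intro x y hxy
    have := hall (e.symm x) (e.symm y) (fun hh => hxy (by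
      have := congrArg e hh
      simpa using this))
    simpa [hG₀def] using this
  obtain ⟨x, y, hxy, hnadj, hx, hy⟩ := aux k hk (Fintype.card V) hkcard G₀ h0 h1 hnc₀
  exact ⟨e x, e y, fun hh => hxy (e.injective hh), hnadj,
    simplicial_of_comap G e k x hx, simplicial_of_comap G e k y hy⟩
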